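/- Define g(x) = (x(x+1)/(x-1)²)·ln((x+1)²/(4x)) and h(x) = 2x/(x+1) for x ∈ (1,∞). Then there exists a unique ã ∈ (1,∞) such that g(x) < h(x) for 1 < x < ã, g(ã) = h(ã), and g(x) > h(x) for x > ã. Moreover ã > 3 + 2√2. -/

import Mathlib

open Real Set

noncomputable section

/-- `g(x) = (x(x+1)/(x-1)²)·ln((x+1)²/(4x))`. -/
def gFun (x : ℝ) : ℝ := (x * (x + 1) / (x - 1) ^ 2) * Real.log ((x + 1) ^ 2 / (4 * x))

/-- `h(x) = 2x/(x+1)`. -/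
def hFun (x : ℝ) : ℝ := 2 * x / (x + 1)

/-- Auxiliary comparison function. -/
def kFun (x : ℝ) : ℝ := 2*(x-1)^2/(x+1)^2 - 2*Real.log (x+1) + Real.log (4*x)

lemma kFun_hasDeriv {x : ℝ} (hx : 0 < x) :
    HasDerivAt kFun ((-(x-1)*(x^2-6*x+1))/(x*(x+1)^3)) x := by
  have hx1 : x + 1 ≠ 0 := by positivity
  have hx0 : x ≠ 0 := ne_of_gt hx
  have h1 : HasDerivAt (fun t : ℝ => 2*(t-1)^2) (2*(2*(x-1)^1*1)) x :=
    (((hasDerivAt_id x).sub_const 1).pow 2).const_mul 2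
  have h2 : HasDerivAt (fun t : ℝ => (t+1)^2) (2*(x+1)^1*1) x :=
    ((hasDerivAt_id x).add_const 1).pow 2
  have hdiv := h1.div h2 (by positivity)
  have hlog1 : HasDerivAt (fun t : ℝ => Real.log (t+1)) ((x+1)⁻¹*1) x :=
    by have := (Real.hasDerivAt_log hx1).comp x ((hasDerivAt_id x).add_const 1); exact this
  have hlog2 : HasDerivAt (fun t : ℝ => Real.log (4*t)) ((4*x)⁻¹*4) x :=
    (Real.hasDerivAt_log (by positivity)).comp x (by simpa using (hasDerivAt_id x).const_mul 4)
  have := (hdiv.sub (hlog1.const_mul 2)).add hlog2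
  refine this.congr_deriv ?_
  field_simp
  ring

lemma gh_diff {x : ℝ} (hx : 1 < x) :
    gFun x - hFun x = -(x*(x+1)/(x-1)^2) * kFun x := by
  have h1 : x - 1 ≠ 0 := by linarith
  have h2 : x + 1 ≠ 0 := by linarith
  have h3 : (4:ℝ)*x ≠ 0 := by positivity
  have hL : Real.log ((x+1)^2/(4*x)) = 2*Real.log (x+1) - Real.log (4*x) := by
    rw [Real.log_div (pow_ne_zero 2 h2) h3, Real.log_pow]
    push_cast; ring
  unfold gFun hFun kFun
  rw [hL]
  field_simp
  ring

lemma sqrt2_facts : 1 < Real.sqrt 2 ∧ Real.sqrt 2 < 2 := by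
  have h := Real.sq_sqrt (by norm_num : (2:ℝ) ≥ 0)
  have h0 := Real.sqrt_nonneg 2
  constructor <;> nlinarith

lemma kFun_one : kFun 1 = 0 := by
  have h4 : Real.log 4 = 2 * Real.log 2 := by
    rw [show (4:ℝ) = 2^2 by norm_num, Real.log_pow]; push_cast; ring
  unfold kFun; norm_num [h4]

lemma kFun_cont : ∀ x : ℝ, 0 < x → ContinuousAt kFun x :=
  fun _ hx => (kFun_hasDeriv hx).continuousAt

lemma kFun_mono : StrictMonoOn kFun (Icc 1 (3 + 2*Real.sqrt 2)) := by
  obtain ⟨hs1, hs2⟩ := sqrt2_facts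
  have hsq := Real.sq_sqrt (by norm_num : (2:ℝ) ≥ 0)
  apply strictMonoOn_of_deriv_pos (convex_Icc _ _)
  · exact fun x hx => (kFun_cont x (by have := hx.1; linarith)).continuousWithinAt
  · intro x hx
    rw [interior_Icc] at hx
    obtain ⟨hx1, hxc⟩ := hx
    have hx0 : (0:ℝ) < x := by linarith
    rw [(kFun_hasDeriv hx0).deriv]
    apply div_pos
    · have hneg : x^2 - 6*x + 1 < 0 := by nlinarith
      nlinarith
    · positivity

lemma kFun_anti : StrictAntiOn kFun (Ici (3 + 2*Real.sqrt 2)) := by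
  obtain ⟨hs1, hs2⟩ := sqrt2_facts
  have hsq := Real.sq_sqrt (by norm_num : (2:ℝ) ≥ 0)
  apply strictAntiOn_of_deriv_neg (convex_Ici _)
  · exact fun x hx => (kFun_cont x (by simp only [mem_Ici] at hx; linarith)).continuousWithinAt
  · intro x hx
    rw [interior_Ici] at hx
    simp only [mem_Ioi] at hx
    have hx0 : (0:ℝ) < x := by linarith
    rw [(kFun_hasDeriv hx0).deriv]
    apply div_neg_of_neg_of_pos
    · have hpos : 0 < x^2 - 6*x + 1 := by nlinarith
      nlinarith
    · positivity

lemma kFun_100 : kFun 100 < 0 := by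
  have hA : (2:ℝ)*(100-1)^2/(100+1)^2 < 2 := by norm_num
  have hB : Real.log 100 < Real.log 101 := Real.log_lt_log (by norm_num) (by norm_num)
  have hC : Real.log 400 = Real.log 4 + Real.log 100 := by
    rw [show (400:ℝ) = 4*100 by norm_num, Real.log_mul (by norm_num) (by norm_num)]
  have hD : Real.log 100 = Real.log 4 + Real.log 25 := by
    rw [show (100:ℝ) = 4*25 by norm_num, Real.log_mul (by norm_num) (by norm_num)]
  have hE : 2 < Real.log 25 := by
    rw [show (2:ℝ) = Real.log (Real.exp 2) by rw [Real.log_exp]]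
    apply Real.log_lt_log (Real.exp_pos 2)
    have := Real.exp_one_lt_d9
    rw [show (2:ℝ) = 1+1 by norm_num, Real.exp_add]
    nlinarith [Real.exp_pos 1]
  unfold kFun
  norm_num
  linarith

/-- From the sign of `kFun` to the comparison of `gFun` and `hFun`. -/
lemma glt_of_kpos {x : ℝ} (hx : 1 < x) (hk : 0 < kFun x) : gFun x < hFun x := by
  have hd : 0 < x*(x+1)/(x-1)^2 := by
    have h1 : (0:ℝ) < x - 1 := by linarith
    positivity
  have := gh_diff hx
  nlinarith [mul_pos hd hk]

lemma hlt_of_kneg {x : ℝ} (hx : 1 < x) (hk : kFun x < 0) : hFun x < gFun x := by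
  have hd : 0 < x*(x+1)/(x-1)^2 := by
    have h1 : (0:ℝ) < x - 1 := by linarith
    positivity
  have := gh_diff hx
  nlinarith [mul_pos hd (neg_pos.mpr hk)]

lemma geq_of_kzero {x : ℝ} (hx : 1 < x) (hk : kFun x = 0) : gFun x = hFun x := by
  have := gh_diff hx
  rw [hk] at this
  linarith [this]

/-- (Lemma 5.2) There is a unique `ã ∈ (1, ∞)` such that `g < h` on `(1, ã)`,
`g(ã) = h(ã)` and `g > h` on `(ã, ∞)`; moreover `ã > 3 + 2√2`. -/
theorem exists_unique_crossing_point :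
    ∃! a : ℝ, 1 < a ∧ 3 + 2 * Real.sqrt 2 < a ∧
      (∀ x : ℝ, 1 < x → x < a → gFun x < hFun x) ∧
      gFun a = hFun a ∧
      (∀ x : ℝ, a < x → hFun x < gFun x) := by
  obtain ⟨hs1, hs2⟩ := sqrt2_facts
  set c : ℝ := 3 + 2 * Real.sqrt 2 with hc_def
  have hc1 : (1:ℝ) < c := by simp only [hc_def]; linarith
  have hc100 : c < 100 := by simp only [hc_def]; linarith
  -- k c > 0
  have hkc : 0 < kFun c := by
    have := kFun_mono (left_mem_Icc.mpr (by linarith)) (right_mem_Icc.mpr (by linarith)) hc1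
    rw [kFun_one] at this
    exact this
  -- IVT on [c, 100]
  have hcont : ContinuousOn kFun (Icc c 100) := fun x hx =>
    (kFun_cont x (by have := hx.1; linarith)).continuousWithinAt
  obtain ⟨a, haIcc, hka⟩ := intermediate_value_Icc' hc100.le hcont
    (mem_Icc.mpr ⟨kFun_100.le, hkc.le⟩)
  obtain ⟨hca, ha100⟩ := haIcc
  have hca' : c < a := lt_of_le_of_ne hca (fun h => by rw [← h] at hka; linarith)
  have ha1 : (1:ℝ) < a := lt_trans hc1 hca'
  have hlt : ∀ x : ℝ, 1 < x → x < a → gFun x < hFun x := by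
    intro x hx1 hxa
    apply glt_of_kpos hx1
    rcases le_or_gt x c with hxc | hcx
    · have := kFun_mono (left_mem_Icc.mpr (by linarith)) ⟨hx1.le, hxc⟩ hx1
      rw [kFun_one] at this
      exact this
    · have := kFun_anti (mem_Ici.mpr hcx.le) (mem_Ici.mpr hca) hxa
      rw [hka] at this
      exact this
  have heq : gFun a = hFun a := geq_of_kzero ha1 hka
  refine ⟨a, ⟨ha1, hca', hlt, heq, ?_⟩, ?_⟩
  · -- h < g on (a, ∞)
    intro x hax
    apply hlt_of_kneg (lt_trans ha1 hax)
    have := kFun_anti (mem_Ici.mpr hca) (mem_Ici.mpr (by linarith)) hax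
    rw [hka] at this
    exact this
  · -- uniqueness
    rintro y ⟨hy1, hyc, hylt, hyeq, hygt⟩
    rcases lt_trichotomy y a with h | h | h
    · have := hlt y hy1 h
      rw [hyeq] at this
      exact absurd this (lt_irrefl _)
    · exact h
    · have := hylt a ha1 h
      rw [heq] at this
      exact absurd this (lt_irrefl _)
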